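/- The generating function P(x) = Σ_{n≥0} a(n) x^n, where a(n) is the number of Motzkin paths of length n all of whose peak heights and valley heights are even, satisfies (x-1)^2 + (x-1)^3 P + x^4 P^2 = 0 as formal power series over ℤ. -/

import Mathlib

inductive Step : Type
  | U : Step
  | D : Step
  | F : Step
  deriving DecidableEq

open Step

/-- A Motzkin path: every prefix has at least as many `U`s as `D`s,
and the whole word has equally many `U`s and `D`s. -/
def IsMotzkin (w : List Step) : Prop :=
  (∀ p : List Step, p <+: w → p.count D ≤ p.count U) ∧ w.count U = w.count D

/-- The number of Motzkin paths of length `n`. -/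
noncomputable def motzkinNum (n : ℕ) : ℕ :=
  Nat.card {w : List Step // w.length = n ∧ IsMotzkin w}

/-- `w` has a peak `U F^k D` whose height (just after the `U` step) is `h`. -/
def HasPeak (w : List Step) (h : ℤ) : Prop :=
  ∃ (a b : List Step) (k : ℕ),
    w = a ++ [U] ++ List.replicate k F ++ [D] ++ b ∧
      (a.count U : ℤ) + 1 - (a.count D : ℤ) = h

/-- `w` has a valley `D F^k U` whose height (just after the `D` step) is `h`. -/
def HasValley (w : List Step) (h : ℤ) : Prop :=
  ∃ (a b : List Step) (k : ℕ),
    w = a ++ [D] ++ List.replicate k F ++ [U] ++ b ∧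
      (a.count U : ℤ) - ((a.count D : ℤ) + 1) = h

/-! ### Auxiliary development -/

/-- The paths we count: Motzkin paths all of whose peak and valley heights are even. -/
def Good (w : List Step) : Prop :=
  IsMotzkin w ∧ (∀ h : ℤ, HasPeak w h → Even h) ∧ (∀ h : ℤ, HasValley w h → Even h)

/-- Mode after an up-step landing at height `h`. -/
def pmU (h : ℕ) : Option Step := if h % 2 = 1 then some U else none

/-- Mode after a down-step landing at height `h`. -/
def pmD (h : ℕ) : Option Step := if h % 2 = 1 then some D else none

/-- Automaton processing a word: state is (height, forced-direction mode). -/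
def run : ℕ → Option Step → List Step → Option (ℕ × Option Step)
  | h, m, [] => some (h, m)
  | h, m, F :: w => run h m w
  | h, m, U :: w => if m = some D then none else run (h+1) (pmU (h+1)) w
  | h, m, D :: w =>
      if m = some U then none else
      match h with
      | 0 => none
      | h'+1 => run h' (pmD h') w

lemma run_append (a b : List Step) : ∀ (h : ℕ) (m : Option Step),
    run h m (a ++ b) = (run h m a).bind fun s => run s.1 s.2 b := by
  induction a with
  | nil => intro h m; simp [run]
  | cons x t ih =>
    intro h m
    cases x with
    | F => simpa [run] using ih h m
    | U =>
      by_cases hm : m = some D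
      · simp [run, hm]
      · simpa [run, hm] using ih _ _
    | D =>
      by_cases hm : m = some U
      · simp [run, hm]
      · cases h with
        | zero => simp [run, hm]
        | succ h' => simpa [run, hm] using ih _ _

lemma run_replicateF (j : ℕ) (h : ℕ) (m : Option Step) :
    run h m (List.replicate j F) = some (h, m) := by
  induction j with
  | zero => simp [run]
  | succ n ih => simpa [List.replicate_succ, run] using ih

lemma run_shift2 {w : List Step} : ∀ {h : ℕ} {m : Option Step} {h' : ℕ} {m' : Option Step},
    run h m w = some (h', m') → run (h+2) m w = some (h'+2, m') := by
  induction w with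
  | nil => intro h m h' m' e; simp [run] at e ⊢; exact e
  | cons x t ih =>
    intro h m h' m' e
    cases x with
    | F => exact ih e
    | U =>
      by_cases hm : m = some D
      · simp [run, hm] at e
      · simp only [run, hm, if_false] at e ⊢
        have hp : pmU (h + 2 + 1) = pmU (h + 1) := by
          have : (h + 2 + 1) % 2 = (h + 1) % 2 := by omega
          simp only [pmU, this]
        rw [show h + 2 + 1 = h + 1 + 2 by ring, hp]
        exact ih e
    | D =>
      by_cases hm : m = some U
      · simp [run, hm] at e
      · cases h with
        | zero => simp [run, hm] at e
        | succ h0 =>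
          simp only [run, hm, if_false] at e ⊢
          have hp : pmD (h0 + 2) = pmD h0 := by
            have : (h0 + 2) % 2 = h0 % 2 := by omega
            simp only [pmD, this]
          rw [hp]
          exact ih e

/-- mode invariant: a nontrivial mode only occurs at odd heights. -/
lemma run_modeInv {w : List Step} : ∀ {h : ℕ} {m : Option Step} {h' : ℕ} {m' : Option Step},
    (m ≠ none → h % 2 = 1) → run h m w = some (h', m') → (m' ≠ none → h' % 2 = 1) := by
  induction w with
  | nil => intro h m h' m' hi e; simp [run] at e; obtain ⟨rfl, rfl⟩ := e; exact hi
  | cons x t ih =>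
    intro h m h' m' hi e
    cases x with
    | F => exact ih hi e
    | U =>
      by_cases hm : m = some D
      · simp [run, hm] at e
      · simp only [run, hm, if_false] at e
        refine ih ?_ e
        intro hne
        by_cases hp : (h+1) % 2 = 1
        · exact hp
        · simp [pmU, hp] at hne
    | D =>
      by_cases hm : m = some U
      · simp [run, hm] at e
      · cases h with
        | zero => simp [run, hm] at e
        | succ h0 =>
          simp only [run, hm, if_false] at e
          refine ih ?_ e
          intro hne
          by_cases hp : h0 % 2 = 1
          · exact hp
          · simp [pmD, hp] at hne

lemma hasPeak_nil (g : ℤ) : ¬ HasPeak [] g := by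
  rintro ⟨a, b, k, he, -⟩
  cases a <;> simp at he

lemma hasValley_nil (g : ℤ) : ¬ HasValley [] g := by
  rintro ⟨a, b, k, he, -⟩
  cases a <;> simp at he

lemma hasPeak_cons_F {w : List Step} {g : ℤ} : HasPeak (F :: w) g ↔ HasPeak w g := by
  constructor
  · rintro ⟨a, b, k, he, hg⟩
    cases a with
    | nil => simp at he
    | cons y a' =>
      simp only [List.cons_append, List.append_assoc, List.cons.injEq] at he
      obtain ⟨rfl, he2⟩ := he
      refine ⟨a', b, k, by simpa using he2, ?_⟩
      simpa [List.count_cons] using hg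
  · rintro ⟨a, b, k, he, hg⟩
    exact ⟨F :: a, b, k, by simp [he], by simpa [List.count_cons] using hg⟩

lemma hasValley_cons_F {w : List Step} {g : ℤ} : HasValley (F :: w) g ↔ HasValley w g := by
  constructor
  · rintro ⟨a, b, k, he, hg⟩
    cases a with
    | nil => simp at he
    | cons y a' =>
      simp only [List.cons_append, List.append_assoc, List.cons.injEq] at he
      obtain ⟨rfl, he2⟩ := he
      refine ⟨a', b, k, by simpa using he2, ?_⟩
      simpa [List.count_cons] using hg
  · rintro ⟨a, b, k, he, hg⟩
    exact ⟨F :: a, b, k, by simp [he], by simpa [List.count_cons] using hg⟩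

lemma hasPeak_cons_U {w : List Step} {g : ℤ} :
    HasPeak (U :: w) g ↔
      (∃ (k : ℕ) (b : List Step), w = List.replicate k F ++ D :: b ∧ g = 1) ∨
      (∃ g' : ℤ, HasPeak w g' ∧ g = g' + 1) := by
  constructor
  · rintro ⟨a, b, k, he, hg⟩
    cases a with
    | nil =>
      left
      simp only [List.nil_append, List.cons_append, List.append_assoc, List.cons.injEq] at he
      refine ⟨k, b, by simpa using he.2, ?_⟩
      simp at hg; omega
    | cons y a' =>
      right
      simp only [List.cons_append, List.append_assoc, List.cons.injEq] at he
      obtain ⟨rfl, he2⟩ := he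
      refine ⟨(a'.count U : ℤ) + 1 - a'.count D, ⟨a', b, k, by simpa using he2, rfl⟩, ?_⟩
      simp only [List.count_cons] at hg
      simp at hg; push_cast at hg ⊢; omega
  · rintro (⟨k, b, he, rfl⟩ | ⟨g', ⟨a, b, k, he, hg⟩, rfl⟩)
    · exact ⟨[], b, k, by simp [he], by simp⟩
    · refine ⟨U :: a, b, k, by simp [he], ?_⟩
      simp only [List.count_cons]
      simp; push_cast at hg ⊢; omega

lemma hasValley_cons_D {w : List Step} {g : ℤ} :
    HasValley (D :: w) g ↔
      (∃ (k : ℕ) (b : List Step), w = List.replicate k F ++ U :: b ∧ g = -1) ∨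
      (∃ g' : ℤ, HasValley w g' ∧ g = g' - 1) := by
  constructor
  · rintro ⟨a, b, k, he, hg⟩
    cases a with
    | nil =>
      left
      simp only [List.nil_append, List.cons_append, List.append_assoc, List.cons.injEq] at he
      refine ⟨k, b, by simpa using he.2, ?_⟩
      simp at hg; omega
    | cons y a' =>
      right
      simp only [List.cons_append, List.append_assoc, List.cons.injEq] at he
      obtain ⟨rfl, he2⟩ := he
      refine ⟨(a'.count U : ℤ) - ((a'.count D : ℤ) + 1), ⟨a', b, k, by simpa using he2, rfl⟩, ?_⟩
      simp only [List.count_cons] at hg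
      simp at hg; push_cast at hg ⊢; omega
  · rintro (⟨k, b, he, rfl⟩ | ⟨g', ⟨a, b, k, he, hg⟩, rfl⟩)
    · exact ⟨[], b, k, by simp [he], by simp⟩
    · refine ⟨D :: a, b, k, by simp [he], ?_⟩
      simp only [List.count_cons]
      simp; push_cast at hg ⊢; omega

lemma hasPeak_cons_D {w : List Step} {g : ℤ} :
    HasPeak (D :: w) g ↔ ∃ g' : ℤ, HasPeak w g' ∧ g = g' - 1 := by
  constructor
  · rintro ⟨a, b, k, he, hg⟩
    cases a with
    | nil => simp at he
    | cons y a' =>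
      simp only [List.cons_append, List.append_assoc, List.cons.injEq] at he
      obtain ⟨rfl, he2⟩ := he
      refine ⟨(a'.count U : ℤ) + 1 - a'.count D, ⟨a', b, k, by simpa using he2, rfl⟩, ?_⟩
      simp only [List.count_cons] at hg
      simp at hg; push_cast at hg ⊢; omega
  · rintro ⟨g', ⟨a, b, k, he, hg⟩, rfl⟩
    refine ⟨D :: a, b, k, by simp [he], ?_⟩
    simp only [List.count_cons]
    simp; push_cast at hg ⊢; omega

lemma hasValley_cons_U {w : List Step} {g : ℤ} :
    HasValley (U :: w) g ↔ ∃ g' : ℤ, HasValley w g' ∧ g = g' + 1 := by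
  constructor
  · rintro ⟨a, b, k, he, hg⟩
    cases a with
    | nil => simp at he
    | cons y a' =>
      simp only [List.cons_append, List.append_assoc, List.cons.injEq] at he
      obtain ⟨rfl, he2⟩ := he
      refine ⟨(a'.count U : ℤ) - ((a'.count D : ℤ) + 1), ⟨a', b, k, by simpa using he2, rfl⟩, ?_⟩
      simp only [List.count_cons] at hg
      simp at hg; push_cast at hg ⊢; omega
  · rintro ⟨g', ⟨a, b, k, he, hg⟩, rfl⟩
    refine ⟨U :: a, b, k, by simp [he], ?_⟩
    simp only [List.count_cons]
    simp; push_cast at hg ⊢; omega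

/-- Constraint imposed by the mode on the immediate future. -/
def Cm : Option Step → List Step → Prop
  | some U, w => ¬∃ (j : ℕ) (b : List Step), w = List.replicate j F ++ D :: b
  | some D, w => ¬∃ (j : ℕ) (b : List Step), w = List.replicate j F ++ U :: b
  | _, _ => True

/-- The global property matching the automaton. -/
def P (h : ℕ) (m : Option Step) (w : List Step) : Prop :=
  (∀ p : List Step, p <+: w → p.count D ≤ p.count U + h) ∧
  (w.count D = w.count U + h) ∧
  (∀ g : ℤ, HasPeak w g → Even (g + h)) ∧
  (∀ g : ℤ, HasValley w g → Even (g + h)) ∧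
  Cm m w

lemma Cm_nil (m : Option Step) : Cm m [] := by
  cases m with
  | none => trivial
  | some s =>
    cases s <;> simp only [Cm] <;> rintro ⟨j, b, he⟩ <;> cases j <;> simp at he

lemma Cm_cons_U {m : Option Step} (hm : m ≠ some D) (t : List Step) : Cm m (U :: t) := by
  cases m with
  | none => trivial
  | some s =>
    cases s with
    | U => rintro ⟨j, b, he⟩; cases j <;> simp [List.replicate_succ] at he
    | D => exact absurd rfl hm
    | F => trivial

lemma Cm_cons_D {m : Option Step} (hm : m ≠ some U) (t : List Step) : Cm m (D :: t) := by
  cases m with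
  | none => trivial
  | some s =>
    cases s with
    | D => rintro ⟨j, b, he⟩; cases j <;> simp [List.replicate_succ] at he
    | U => exact absurd rfl hm
    | F => trivial

lemma patternD_cons_F {t : List Step} :
    (∃ (j : ℕ) (b : List Step), F :: t = List.replicate j F ++ D :: b) ↔
    (∃ (j : ℕ) (b : List Step), t = List.replicate j F ++ D :: b) := by
  constructor
  · rintro ⟨j, b, he⟩
    cases j with
    | zero => simp at he
    | succ j' =>
      rw [List.replicate_succ] at he
      simp only [List.cons_append, List.cons.injEq] at he
      exact ⟨j', b, he.2⟩
  · rintro ⟨j, b, he⟩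
    exact ⟨j + 1, b, by rw [List.replicate_succ]; simp [he]⟩

lemma patternU_cons_F {t : List Step} :
    (∃ (j : ℕ) (b : List Step), F :: t = List.replicate j F ++ U :: b) ↔
    (∃ (j : ℕ) (b : List Step), t = List.replicate j F ++ U :: b) := by
  constructor
  · rintro ⟨j, b, he⟩
    cases j with
    | zero => simp at he
    | succ j' =>
      rw [List.replicate_succ] at he
      simp only [List.cons_append, List.cons.injEq] at he
      exact ⟨j', b, he.2⟩
  · rintro ⟨j, b, he⟩
    exact ⟨j + 1, b, by rw [List.replicate_succ]; simp [he]⟩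

lemma Cm_cons_F {m : Option Step} {t : List Step} : Cm m (F :: t) ↔ Cm m t := by
  cases m with
  | none => rfl
  | some s =>
    cases s with
    | U => exact not_congr patternD_cons_F
    | D => exact not_congr patternU_cons_F
    | F => rfl

lemma P_nil {h : ℕ} {m : Option Step} : P h m [] ↔ h = 0 := by
  constructor
  · rintro ⟨-, hc, -⟩; simpa using hc.symm
  · rintro rfl
    refine ⟨?_, by simp, ?_, ?_, Cm_nil m⟩
    · intro p hp; rw [List.prefix_nil] at hp; simp [hp]
    · intro g hg; exact absurd hg (hasPeak_nil g)
    · intro g hg; exact absurd hg (hasValley_nil g)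

lemma P_cons_F {h : ℕ} {m : Option Step} {t : List Step} : P h m (F :: t) ↔ P h m t := by
  unfold P
  rw [Cm_cons_F]
  constructor
  · rintro ⟨h1, h2, h3, h4, h5⟩
    refine ⟨?_, ?_, ?_, ?_, h5⟩
    · intro p hp
      have := h1 (F :: p) (by simpa [List.cons_prefix_cons] using hp)
      simpa [List.count_cons] using this
    · simpa [List.count_cons] using h2
    · intro g hg; exact h3 g (hasPeak_cons_F.2 hg)
    · intro g hg; exact h4 g (hasValley_cons_F.2 hg)
  · rintro ⟨h1, h2, h3, h4, h5⟩
    refine ⟨?_, ?_, ?_, ?_, h5⟩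
    · intro p hp
      rcases List.prefix_cons_iff.1 hp with rfl | ⟨q, rfl, hq⟩
      · simp
      · have := h1 q hq
        simpa [List.count_cons] using this
    · simpa [List.count_cons] using h2
    · intro g hg; exact h3 g (hasPeak_cons_F.1 hg)
    · intro g hg; exact h4 g (hasValley_cons_F.1 hg)

lemma P_cons_U {h : ℕ} {m : Option Step} {t : List Step} (hm : m ≠ some D) :
    P h m (U :: t) ↔ P (h + 1) (pmU (h + 1)) t := by
  constructor
  · rintro ⟨h1, h2, h3, h4, h5⟩
    refine ⟨?_, ?_, ?_, ?_, ?_⟩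
    · intro p hp
      have := h1 (U :: p) (by simpa [List.cons_prefix_cons] using hp)
      simp only [List.count_cons] at this
      simp at this; omega
    · have := h2
      simp only [List.count_cons] at this
      simp at this; omega
    · intro g hg
      have := h3 (g + 1) (hasPeak_cons_U.2 (Or.inr ⟨g, hg, rfl⟩))
      rw [Int.even_iff] at this ⊢; push_cast at this ⊢; omega
    · intro g hg
      have := h4 (g + 1) (hasValley_cons_U.2 ⟨g, hg, rfl⟩)
      rw [Int.even_iff] at this ⊢; push_cast at this ⊢; omega
    · by_cases hp : (h + 1) % 2 = 1
      · simp only [pmU, hp, if_pos]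
        rintro ⟨j, b, he⟩
        have := h3 1 (hasPeak_cons_U.2 (Or.inl ⟨j, b, he, rfl⟩))
        rw [Int.even_iff] at this; push_cast at this; omega
      · simp only [pmU, hp, if_neg]; trivial
  · rintro ⟨h1, h2, h3, h4, h5⟩
    refine ⟨?_, ?_, ?_, ?_, Cm_cons_U hm t⟩
    · intro p hp
      rcases List.prefix_cons_iff.1 hp with rfl | ⟨q, rfl, hq⟩
      · simp
      · have := h1 q hq
        simp only [List.count_cons]
        simp; omega
    · simp only [List.count_cons]; simp; omega
    · intro g hg
      rcases hasPeak_cons_U.1 hg with ⟨k, b, he, rfl⟩ | ⟨g', hp', rfl⟩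
      · by_cases hp : (h + 1) % 2 = 1
        · have h5' : ¬∃ (j : ℕ) (b : List Step), t = List.replicate j F ++ D :: b := by
            simpa [pmU, hp, Cm] using h5
          exact absurd ⟨k, b, he⟩ h5'
        · rw [Int.even_iff]; push_cast; omega
      · have := h3 g' hp'
        rw [Int.even_iff] at this ⊢; push_cast at this ⊢; omega
    · intro g hg
      rcases hasValley_cons_U.1 hg with ⟨g', hv', rfl⟩
      have := h4 g' hv'
      rw [Int.even_iff] at this ⊢; push_cast at this ⊢; omega

lemma P_cons_D {h : ℕ} {m : Option Step} {t : List Step} (hm : m ≠ some U) :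
    P (h + 1) m (D :: t) ↔ P h (pmD h) t := by
  constructor
  · rintro ⟨h1, h2, h3, h4, h5⟩
    refine ⟨?_, ?_, ?_, ?_, ?_⟩
    · intro p hp
      have := h1 (D :: p) (by simpa [List.cons_prefix_cons] using hp)
      simp only [List.count_cons] at this
      simp at this; omega
    · have := h2
      simp only [List.count_cons] at this
      simp at this; omega
    · intro g hg
      have := h3 (g - 1) (hasPeak_cons_D.2 ⟨g, hg, rfl⟩)
      rw [Int.even_iff] at this ⊢; push_cast at this ⊢; omega
    · intro g hg
      have := h4 (g - 1) (hasValley_cons_D.2 (Or.inr ⟨g, hg, rfl⟩))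
      rw [Int.even_iff] at this ⊢; push_cast at this ⊢; omega
    · by_cases hp : h % 2 = 1
      · simp only [pmD, hp, if_pos]
        rintro ⟨j, b, he⟩
        have := h4 (-1) (hasValley_cons_D.2 (Or.inl ⟨j, b, he, rfl⟩))
        rw [Int.even_iff] at this; push_cast at this; omega
      · simp only [pmD, hp, if_neg]; trivial
  · rintro ⟨h1, h2, h3, h4, h5⟩
    refine ⟨?_, ?_, ?_, ?_, Cm_cons_D hm t⟩
    · intro p hp
      rcases List.prefix_cons_iff.1 hp with rfl | ⟨q, rfl, hq⟩
      · simp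
      · have := h1 q hq
        simp only [List.count_cons]
        simp; omega
    · simp only [List.count_cons]; simp; omega
    · intro g hg
      rcases hasPeak_cons_D.1 hg with ⟨g', hp', rfl⟩
      have := h3 g' hp'
      rw [Int.even_iff] at this ⊢; push_cast at this ⊢; omega
    · intro g hg
      rcases hasValley_cons_D.1 hg with ⟨k, b, he, rfl⟩ | ⟨g', hv', rfl⟩
      · by_cases hp : h % 2 = 1
        · have h5' : ¬∃ (j : ℕ) (b : List Step), t = List.replicate j F ++ U :: b := by
            simpa [pmD, hp, Cm] using h5
          exact absurd ⟨k, b, he⟩ h5'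
        · rw [Int.even_iff]; push_cast; omega
      · have := h4 g' hv'
        rw [Int.even_iff] at this ⊢; push_cast at this ⊢; omega

lemma P_cons_U_modefail {h : ℕ} {t : List Step} : ¬ P h (some D) (U :: t) := by
  rintro ⟨-, -, -, -, h5⟩
  exact h5 ⟨0, t, by simp⟩

lemma P_cons_D_modefail {h : ℕ} {t : List Step} : ¬ P h (some U) (D :: t) := by
  rintro ⟨-, -, -, -, h5⟩
  exact h5 ⟨0, t, by simp⟩

lemma P_cons_D_zero {m : Option Step} {t : List Step} : ¬ P 0 m (D :: t) := by
  rintro ⟨h1, -⟩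
  have := h1 [D] ⟨t, rfl⟩
  simp at this

lemma run_iff_P : ∀ (w : List Step) (h : ℕ) (m : Option Step), (m ≠ none → h % 2 = 1) →
    (run h m w = some (0, none) ↔ P h m w) := by
  intro w
  induction w with
  | nil =>
    intro h m hinv
    show some (h, m) = some (0, none) ↔ _
    rw [P_nil]
    simp only [Option.some.injEq, Prod.mk.injEq]
    constructor
    · exact fun hh => hh.1
    · rintro rfl
      refine ⟨rfl, ?_⟩
      cases m with
      | none => rfl
      | some s => exact absurd (hinv (by simp)) (by simp)
  | cons x t ih =>
    intro h m hinv
    cases x with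
    | F =>
      show run h m t = some (0, none) ↔ _
      rw [P_cons_F]
      exact ih h m hinv
    | U =>
      by_cases hm : m = some D
      · subst hm
        simp only [run, if_pos rfl]
        exact iff_of_false (by simp) P_cons_U_modefail
      · rw [show run h m (U :: t) = run (h+1) (pmU (h+1)) t by simp [run, hm]]
        rw [P_cons_U hm]
        refine ih (h+1) _ ?_
        intro hne
        by_cases hp : (h+1) % 2 = 1
        · exact hp
        · simp [pmU, hp] at hne
    | D =>
      by_cases hm : m = some U
      · subst hm
        simp only [run, if_pos rfl]
        exact iff_of_false (by simp) P_cons_D_modefail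
      · cases h with
        | zero =>
          have : run 0 m (D :: t) = none := by simp [run, hm]
          rw [this]
          exact iff_of_false (by simp) P_cons_D_zero
        | succ h' =>
          rw [show run (h'+1) m (D :: t) = run h' (pmD h') t by simp [run, hm]]
          rw [P_cons_D hm]
          refine ih h' _ ?_
          intro hne
          by_cases hp : h' % 2 = 1
          · exact hp
          · simp [pmD, hp] at hne

/-- The main bridge: `Good` matches the automaton. -/
lemma good_iff_run {w : List Step} : Good w ↔ run 0 none w = some (0, none) := by
  rw [run_iff_P w 0 none (by simp)]
  unfold Good P IsMotzkin Cm
  constructor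
  · rintro ⟨⟨hpre, hcnt⟩, hpk, hvl⟩
    refine ⟨by simpa using hpre, by simpa using hcnt.symm, ?_, ?_, trivial⟩
    · intro g hg; simpa using hpk g hg
    · intro g hg; simpa using hvl g hg
  · rintro ⟨hpre, hcnt, hpk, hvl, -⟩
    refine ⟨⟨by simpa using hpre, by simpa using hcnt.symm⟩, ?_, ?_⟩
    · intro g hg; simpa using hpk g hg
    · intro g hg; simpa using hvl g hg

lemma run_someU_struct : ∀ (v : List Step) (h : ℕ) (s : ℕ × Option Step),
    run h (some U) v = some s →
    (v = List.replicate v.length F ∧ s = (h, some U)) ∨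
    ∃ (j : ℕ) (v2 : List Step), v = List.replicate j F ++ U :: v2 ∧
      run (h+1) (pmU (h+1)) v2 = some s := by
  intro v
  induction v with
  | nil => intro h s e; left; exact ⟨by simp, by simpa [run] using e.symm⟩
  | cons x t ih =>
    intro h s e
    cases x with
    | F =>
      rcases ih h s e with ⟨h1, h2⟩ | ⟨j, v2, h1, h2⟩
      · left
        refine ⟨?_, h2⟩
        conv_lhs => rw [h1]
        simp [List.replicate_succ]
      · right
        exact ⟨j + 1, v2, by rw [List.replicate_succ]; simp [h1], h2⟩
    | U =>
      right
      exact ⟨0, t, by simp, by simpa [run] using e⟩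
    | D => simp [run] at e

lemma run_someD_struct : ∀ (v : List Step) (h : ℕ) (s : ℕ × Option Step),
    run h (some D) v = some s →
    (v = List.replicate v.length F ∧ s = (h, some D)) ∨
    ∃ (j : ℕ) (v2 : List Step) (h' : ℕ), h = h' + 1 ∧ v = List.replicate j F ++ D :: v2 ∧
      run h' (pmD h') v2 = some s := by
  intro v
  induction v with
  | nil => intro h s e; left; exact ⟨by simp, by simpa [run] using e.symm⟩
  | cons x t ih =>
    intro h s e
    cases x with
    | F =>
      rcases ih h s e with ⟨h1, h2⟩ | ⟨j, v2, h', h0, h1, h2⟩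
      · left
        refine ⟨?_, h2⟩
        conv_lhs => rw [h1]
        simp [List.replicate_succ]
      · right
        exact ⟨j + 1, v2, h', h0, by rw [List.replicate_succ]; simp [h1], h2⟩
    | D =>
      right
      cases h with
      | zero => simp [run] at e
      | succ h' => exact ⟨0, t, h', rfl, by simp, by simpa [run] using e⟩
    | U => simp [run] at e

lemma run_descent : ∀ (n : ℕ) (v : List Step), v.length ≤ n →
    ∀ (h : ℕ) (m : Option Step) (k : ℕ) (mf : Option Step),
    run (h+2) m v = some (k, mf) → k ≤ h + 1 →
    ∃ (c r : List Step) (m' : Option Step),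
      v = c ++ D :: r ∧ run (h+2) m c = some (h+2, m') ∧
      run h m c = some (h, m') ∧ m' ≠ some U := by
  intro n
  induction n with
  | zero =>
    intro v hv h m k mf e hk
    rw [List.length_eq_zero_iff.1 (Nat.le_zero.1 hv)] at e
    simp [run] at e
    omega
  | succ n ih =>
    intro v hv h m k mf e hk
    cases v with
    | nil => simp [run] at e; omega
    | cons x t =>
      simp only [List.length_cons, Nat.add_le_add_iff_right] at hv
      cases x with
      | F =>
        obtain ⟨c, r, m', h1, h2, h3, h4⟩ := ih t hv h m k mf e hk
        exact ⟨F :: c, r, m', by simp [h1], h2, h3, h4⟩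
      | D =>
        by_cases hm : m = some U
        · simp [run, hm] at e
        · exact ⟨[], t, m, rfl, by simp [run], by simp [run], hm⟩
      | U =>
        by_cases hm : m = some D
        · simp [run, hm] at e
        · have e1 : run (h+3) (pmU (h+3)) t = some (k, mf) := by simpa [run, hm] using e
          obtain ⟨c1, r1, m1, h1, h2, h3, h4⟩ :=
            ih t hv (h+1) (pmU (h+3)) k mf (by simpa using e1) (by omega)
          -- after c1 and a D from h+3, continue in r1
          have e2 : run (h+2) (pmD (h+2)) r1 = some (k, mf) := by
            rw [h1, run_append] at e1
            rw [show h + 1 + 2 = h + 3 by ring] at h2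
            rw [h2] at e1
            simpa [run, h4] using e1
          obtain ⟨c2, r2, m2, g1, g2, g3, g4⟩ :=
            ih r1 (by rw [h1] at hv; simp at hv; omega) h (pmD (h+2)) k mf e2 hk
          · refine ⟨U :: (c1 ++ D :: c2), r2, m2, ?_, ?_, ?_, g4⟩
            · simp [h1, g1]
            · show run (h+2) m (U :: (c1 ++ D :: c2)) = some (h+2, m2)
              rw [show run (h+2) m (U :: (c1 ++ D :: c2))
                    = run (h+3) (pmU (h+3)) (c1 ++ D :: c2) by simp [run, hm]]
              rw [run_append, show h + 1 + 2 = h + 3 by ring] at *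
              rw [h2]
              simpa [run, h4] using g2
            · show run h m (U :: (c1 ++ D :: c2)) = some (h, m2)
              rw [show run h m (U :: (c1 ++ D :: c2))
                    = run (h+1) (pmU (h+1)) (c1 ++ D :: c2) by simp [run, hm]]
              have hpU : pmU (h+1) = pmU (h+3) := by
                have : (h+1) % 2 = (h+3) % 2 := by omega
                simp only [pmU, this]
              have hpD : pmD h = pmD (h+2) := by
                have : h % 2 = (h+2) % 2 := by omega
                simp only [pmD, this]
              rw [run_append, hpU, h3]
              show run (h+1) m1 (D :: c2) = some (h, m2)
              have hstep : run (h+1) m1 (D :: c2) = run h (pmD h) c2 := by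
                simp [run, h4]
              rw [hstep, hpD]
              exact g3

/-- Shorthand for the canonical composite word. -/
def comp (j k : ℕ) (c w : List Step) : List Step :=
  U :: (List.replicate j F ++ U :: (c ++ D :: (List.replicate k F ++ D :: w)))

lemma run_compose {c w : List Step} (hc : run 0 none c = some (0, none))
    (hw : run 0 none w = some (0, none)) (j k : ℕ) :
    run 0 none (comp j k c w) = some (0, none) := by
  have h1 : pmU 1 = some U := by simp [pmU]
  have h2 : pmU 2 = none := by simp [pmU]
  have h3 : pmD 1 = some D := by simp [pmD]
  have h4 : pmD 0 = none := by simp [pmD]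
  show run 1 (pmU 1) (List.replicate j F ++ U :: (c ++ D :: (List.replicate k F ++ D :: w)))
      = some (0, none)
  rw [h1, run_append, run_replicateF]
  show run 2 (pmU 2) (c ++ D :: (List.replicate k F ++ D :: w)) = some (0, none)
  rw [h2, run_append, run_shift2 hc]
  show run 1 (pmD 1) (List.replicate k F ++ D :: w) = some (0, none)
  rw [h3, run_append, run_replicateF]
  show run 0 (pmD 0) w = some (0, none)
  rw [h4]
  exact hw

lemma run_decompose {v : List Step} (hv : run 0 none (U :: v) = some (0, none)) :
    ∃ (j k : ℕ) (c w : List Step), U :: v = comp j k c w ∧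
      run 0 none c = some (0, none) ∧ run 0 none w = some (0, none) := by
  have h1 : pmU 1 = some U := by simp [pmU]
  have e1 : run 1 (some U) v = some (0, none) := by
    rw [← h1]; simpa [run] using hv
  rcases run_someU_struct v 1 (0, none) e1 with ⟨-, hs⟩ | ⟨j, v2, hv2, e2⟩
  · exact absurd hs (by simp)
  · have h2 : pmU 2 = none := by simp [pmU]
    rw [h2] at e2
    obtain ⟨c, r, m', hc1, hc2, hc3, -⟩ :=
      run_descent v2.length v2 le_rfl 0 none 0 none e2 (by omega)
    have hm' : m' = none := by
      have := run_modeInv (w := c) (by simp) hc3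
      cases m' with
      | none => rfl
      | some s => simpa using this (by simp)
    subst hm'
    -- after c, a D-step from height 2, then r
    have e3 : run 1 (pmD 1) r = some (0, none) := by
      rw [hc1, run_append, hc2] at e2
      simpa [run] using e2
    have h3 : pmD 1 = some D := by simp [pmD]
    rw [h3] at e3
    rcases run_someD_struct r 1 (0, none) e3 with ⟨-, hs⟩ | ⟨k, w, h', hh', hw1, e4⟩
    · exact absurd hs (by simp)
    · have hh0 : h' = 0 := by omega
      subst hh0
      have h4 : pmD 0 = none := by simp [pmD]
      rw [h4] at e4
      exact ⟨j, k, c, w, by rw [comp, hv2, hc1, hw1], hc3, e4⟩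

lemma replicate_append_inj {x : Step} (hx : x ≠ F) : ∀ {j j' : ℕ} {A A' : List Step},
    List.replicate j F ++ x :: A = List.replicate j' F ++ x :: A' → j = j' ∧ A = A' := by
  intro j
  induction j with
  | zero =>
    intro j' A A' he
    cases j' with
    | zero => simpa using he
    | succ j'' =>
      rw [List.replicate_succ] at he
      simp only [List.replicate_zero, List.nil_append, List.cons_append, List.cons.injEq] at he
      exact absurd he.1 hx
  | succ j'' ih =>
    intro j' A A' he
    cases j' with
    | zero =>
      rw [List.replicate_succ] at he
      simp only [List.replicate_zero, List.nil_append, List.cons_append, List.cons.injEq] at he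
      exact absurd he.1.symm hx
    | succ j3 =>
      rw [List.replicate_succ, List.replicate_succ] at he
      simp only [List.cons_append, List.cons.injEq, true_and] at he
      obtain ⟨h1, h2⟩ := ih he
      exact ⟨by omega, h2⟩

lemma run_good_counts {c : List Step} (hc : run 0 none c = some (0, none)) :
    (∀ p : List Step, p <+: c → p.count D ≤ p.count U) ∧ c.count U = c.count D := by
  have := (run_iff_P c 0 none (by simp)).1 hc
  obtain ⟨h1, h2, -⟩ := this
  exact ⟨fun p hp => by simpa using h1 p hp, by simpa using h2.symm⟩

lemma middle_inj {c c' X X' : List Step}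
    (hc : run 0 none c = some (0, none)) (hc' : run 0 none c' = some (0, none))
    (he : c ++ D :: X = c' ++ D :: X') : c = c' ∧ X = X' := by
  rcases List.append_eq_append_iff.1 he with ⟨a', ha1, ha2⟩ | ⟨a', ha1, ha2⟩
  · cases a' with
    | nil => simp at ha1 ha2; exact ⟨ha1.symm, by simpa using ha2⟩
    | cons y a'' =>
      simp only [List.cons_append, List.cons.injEq] at ha2
      obtain ⟨rfl, -⟩ := ha2
      exfalso
      obtain ⟨hp', -⟩ := run_good_counts hc'
      obtain ⟨-, hcnt⟩ := run_good_counts hc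
      have hpre : c ++ [D] <+: c' := by
        rw [ha1]; exact ⟨a'', by simp⟩
      have := hp' (c ++ [D]) hpre
      simp [List.count_append] at this
      omega
  · cases a' with
    | nil => simp at ha1 ha2; exact ⟨ha1, by simpa using ha2.symm⟩
    | cons y a'' =>
      simp only [List.cons_append, List.cons.injEq] at ha2
      obtain ⟨rfl, -⟩ := ha2
      exfalso
      obtain ⟨hp, -⟩ := run_good_counts hc
      obtain ⟨-, hcnt'⟩ := run_good_counts hc'
      have hpre : c' ++ [D] <+: c := by
        rw [ha1]; exact ⟨a'', by simp⟩
      have := hp (c' ++ [D]) hpre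
      simp [List.count_append] at this
      omega

lemma comp_inj {j k j' k' : ℕ} {c w c' w' : List Step}
    (hc : run 0 none c = some (0, none)) (hc' : run 0 none c' = some (0, none))
    (he : comp j k c w = comp j' k' c' w') : j = j' ∧ k = k' ∧ c = c' ∧ w = w' := by
  unfold comp at he
  simp only [List.cons.injEq, true_and] at he
  obtain ⟨hj, he2⟩ := replicate_append_inj (by simp) he
  obtain ⟨hcc, he3⟩ := middle_inj hc hc' he2
  obtain ⟨hk, hww⟩ := replicate_append_inj (by simp) he3
  exact ⟨hj, hk, hcc, hww⟩

lemma comp_length (j k : ℕ) (c w : List Step) :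
    (comp j k c w).length = j + k + c.length + w.length + 4 := by
  simp [comp]; omega

/-! ### Counting -/

instance : Fintype Step :=
  { elems := {Step.U, Step.D, Step.F}, complete := by intro x; cases x <;> simp }

/-- Good paths of length `n`. -/
def GoodT (n : ℕ) : Type := {w : List Step // w.length = n ∧ Good w}

/-- Good paths of length `n` starting with `U`. -/
def UGoodT (n : ℕ) : Type := {w : List Step // w.length = n ∧ Good w ∧ ∃ v, w = U :: v}

instance GoodT.finite (n : ℕ) : Finite (GoodT n) := by
  have hf : {l : List Step | l.length = n}.Finite := List.finite_length_eq _ n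
  haveI := hf.to_subtype
  exact Finite.of_injective
    (fun w : GoodT n => (⟨w.1, w.2.1⟩ : {l : List Step | l.length = n}))
    (fun a b h => Subtype.ext (congrArg (fun z => z.1) h))

instance UGoodT.finite (n : ℕ) : Finite (UGoodT n) := by
  have hf : {l : List Step | l.length = n}.Finite := List.finite_length_eq _ n
  haveI := hf.to_subtype
  exact Finite.of_injective
    (fun w : UGoodT n => (⟨w.1, w.2.1⟩ : {l : List Step | l.length = n}))
    (fun a b h => Subtype.ext (congrArg (fun z => z.1) h))

/-- Number of good paths of length `n`. -/
noncomputable def aa (n : ℕ) : ℕ := Nat.card (GoodT n)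

noncomputable def au (n : ℕ) : ℕ := Nat.card (UGoodT n)

lemma good_nil : Good ([] : List Step) := good_iff_run.2 rfl

lemma aa_zero : aa 0 = 1 := by
  rw [aa, Nat.card_eq_one_iff_unique]
  constructor
  · constructor
    intro x y
    apply Subtype.ext
    have hx := x.2.1
    have hy := y.2.1
    rw [List.length_eq_zero_iff] at hx hy
    rw [hx, hy]
  · exact ⟨⟨[], rfl, good_nil⟩⟩

lemma good_cons_F {t : List Step} : Good (F :: t) ↔ Good t := by
  rw [good_iff_run, good_iff_run]; rfl

lemma not_good_cons_D {t : List Step} : ¬ Good (D :: t) := by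
  rw [good_iff_run]
  simp [run]

lemma aa_succ (n : ℕ) : aa (n + 1) = aa n + au (n + 1) := by
  rw [aa, aa, au, ← Nat.card_sum]
  symm
  apply Nat.card_eq_of_bijective
    (f := fun x : GoodT n ⊕ UGoodT (n+1) => match x with
      | Sum.inl w => (⟨F :: w.1, by simp [w.2.1], good_cons_F.2 w.2.2⟩ : GoodT (n+1))
      | Sum.inr w => ⟨w.1, w.2.1, w.2.2.1⟩)
  constructor
  · rintro (w | w) (w' | w') h
    · have h' : F :: w.1 = F :: w'.1 := congrArg (fun z => z.1) h
      exact congrArg Sum.inl (Subtype.ext (by simpa using h'))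
    · exfalso
      obtain ⟨v, hv⟩ := w'.2.2.2
      have : F :: w.1 = w'.1 := congrArg Subtype.val h
      rw [hv] at this
      simp at this
    · exfalso
      obtain ⟨v, hv⟩ := w.2.2.2
      have : w.1 = F :: w'.1 := congrArg Subtype.val h
      rw [hv] at this
      simp at this
    · exact congrArg Sum.inr (Subtype.ext (congrArg (fun z => z.1) h))
  · rintro ⟨w, hl, hg⟩
    match w, hl with
    | x :: t, hl =>
      cases x with
      | F =>
        refine ⟨Sum.inl ⟨t, by simpa using hl, good_cons_F.1 hg⟩, rfl⟩
      | U =>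
        exact ⟨Sum.inr ⟨U :: t, hl, hg, t, rfl⟩, rfl⟩
      | D => exact absurd hg not_good_cons_D

lemma au_small (n : ℕ) (hn : n ≤ 3) : au n = 0 := by
  rw [au, Nat.card_eq_zero]
  left
  constructor
  rintro ⟨w, hl, hg, v, rfl⟩
  obtain ⟨j, k, c, w', he, -, -⟩ := run_decompose (good_iff_run.1 hg)
  rw [he, comp_length] at hl
  omega

/-- Pairs (gap, good path of length ≤ s): counts `coeff s` of `(1-X)⁻¹ * G`. -/
def IG (s : ℕ) : Type := Σ i : Fin (s+1), GoodT i.1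

/-- Index type for the quadratic term. -/
def Tn (n : ℕ) : Type := Σ s : Fin (n+1), IG s.1 × IG (n - s.1)

instance (s : ℕ) : Finite (IG s) := by unfold IG; infer_instance
instance (n : ℕ) : Finite (Tn n) := by unfold Tn; infer_instance

lemma au_eq_card_Tn (n : ℕ) : au (n + 4) = Nat.card (Tn n) := by
  rw [au]
  symm
  apply Nat.card_eq_of_bijective (f := fun x : Tn n =>
    (⟨comp (x.1.1 - x.2.1.1.1) ((n - x.1.1) - x.2.2.1.1) x.2.1.2.1 x.2.2.2.1, by
        rw [comp_length]
        have h1 := x.1.2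
        have h2 := x.2.1.1.2
        have h3 := x.2.2.1.2
        have e1 := x.2.1.2.2.1
        have e2 := x.2.2.2.2.1
        omega, by
        exact good_iff_run.2 (run_compose (good_iff_run.1 x.2.1.2.2.2)
          (good_iff_run.1 x.2.2.2.2.2) _ _), by
        exact ⟨_, rfl⟩⟩ : UGoodT (n + 4)))
  constructor
  · rintro ⟨⟨s, hs⟩, ⟨⟨i, hi⟩, w1, hw1l, hw1g⟩, ⟨⟨i2, hi2⟩, w2, hw2l, hw2g⟩⟩
      ⟨⟨s', hs'⟩, ⟨⟨i', hi'⟩, w1', hw1l', hw1g'⟩, ⟨⟨i2', hi2'⟩, w2', hw2l', hw2g'⟩⟩ h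
    have hv := congrArg (fun z => z.1) h
    simp only at hv
    obtain ⟨hj, hk, hc, hw⟩ := comp_inj (good_iff_run.1 hw1g) (good_iff_run.1 hw1g') hv
    have hL1 : w1.length = i := by simpa using hw1l
    have hL1' : w1'.length = i' := by simpa using hw1l'
    have hL2 : w2.length = i2 := by simpa using hw2l
    have hL2' : w2'.length = i2' := by simpa using hw2l'
    have hb1 : i < s + 1 := by simpa using hi
    have hb1' : i' < s' + 1 := by simpa using hi'
    have hii : i = i' := by rw [hc] at hL1; omega
    have hii2 : i2 = i2' := by rw [hw] at hL2; omega
    have hss : s = s' := by omega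
    subst hss hii hii2 hc hw
    rfl
  · rintro ⟨w, hl, hg, v, rfl⟩
    obtain ⟨j, k, c, w', he, hc, hw'⟩ := run_decompose (good_iff_run.1 hg)
    rw [he, comp_length] at hl
    refine ⟨⟨⟨j + c.length, by omega⟩,
      ⟨⟨c.length, by show c.length < (j + c.length) + 1; omega⟩, ⟨c, rfl, good_iff_run.2 hc⟩⟩,
      ⟨⟨w'.length, by show w'.length < n - (j + c.length) + 1; omega⟩,
        ⟨w', rfl, good_iff_run.2 hw'⟩⟩⟩, ?_⟩
    apply Subtype.ext
    show comp ((j + c.length) - c.length) ((n - (j + c.length)) - w'.length) c w' = U :: v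
    have e1 : (j + c.length) - c.length = j := by omega
    have e2 : (n - (j + c.length)) - w'.length = k := by omega
    rw [e1, e2, ← he]

lemma nat_card_sigma_fin {m : ℕ} (f : Fin m → Type) [∀ i, Finite (f i)] :
    Nat.card (Σ i, f i) = ∑ i, Nat.card (f i) := by
  letI : ∀ i, Fintype (f i) := fun i => Fintype.ofFinite _
  rw [Nat.card_eq_fintype_card, Fintype.card_sigma]
  exact Finset.sum_congr rfl fun i _ => Nat.card_eq_fintype_card.symm

/-- Partial sums of `aa`. -/
noncomputable def Sa (s : ℕ) : ℕ := ∑ i ∈ Finset.range (s+1), aa i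

lemma card_IG (s : ℕ) : Nat.card (IG s) = Sa s := by
  rw [IG, nat_card_sigma_fin, Sa, ← Fin.sum_univ_eq_sum_range]
  rfl

lemma card_Tn (n : ℕ) : Nat.card (Tn n) = ∑ s ∈ Finset.range (n+1), Sa s * Sa (n - s) := by
  rw [Tn, nat_card_sigma_fin, ← Fin.sum_univ_eq_sum_range]
  exact Finset.sum_congr rfl fun i _ => by rw [Nat.card_prod, card_IG, card_IG]

lemma aa_rec (n : ℕ) :
    aa (n + 4) = aa (n + 3) + ∑ s ∈ Finset.range (n+1), Sa s * Sa (n - s) := by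
  rw [show n + 4 = (n + 3) + 1 by ring, aa_succ, au_eq_card_Tn, card_Tn]

lemma aa_one : aa 1 = 1 := by
  rw [show (1:ℕ) = 0 + 1 from rfl, aa_succ, au_small 1 (by omega), aa_zero]

lemma aa_two : aa 2 = 1 := by
  rw [show (2:ℕ) = 1 + 1 from rfl, aa_succ, au_small 2 (by omega), aa_one]

lemma aa_three : aa 3 = 1 := by
  rw [show (3:ℕ) = 2 + 1 from rfl, aa_succ, au_small 3 (by omega), aa_two]

/-! ### Power series -/

open PowerSeries

/-- The generating function of `aa`. -/
noncomputable def Gs : ℤ⟦X⟧ := PowerSeries.mk fun n => (aa n : ℤ)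

/-- The geometric series `1/(1-X)`. -/
noncomputable def Iser : ℤ⟦X⟧ := PowerSeries.mk fun _ => (1 : ℤ)

lemma Ieq : ((1 : ℤ⟦X⟧) - X) * Iser = 1 := by
  ext n
  rw [sub_mul, one_mul, map_sub, PowerSeries.coeff_one]
  cases n with
  | zero => simp [Iser]
  | succ n => simp [Iser, PowerSeries.coeff_succ_X_mul]

lemma SaEq : Iser * Gs = PowerSeries.mk fun n => (Sa n : ℤ) := by
  ext n
  rw [PowerSeries.coeff_mul, PowerSeries.coeff_mk]
  have : ∀ p ∈ Finset.HasAntidiagonal.antidiagonal n,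
      (PowerSeries.coeff p.1) Iser * (PowerSeries.coeff p.2) Gs = (aa p.2 : ℤ) := by
    intro p _
    simp [Iser, Gs]
  rw [Finset.sum_congr rfl this,
    Finset.Nat.sum_antidiagonal_eq_sum_range_succ (f := fun _ j => (aa j : ℤ))]
  rw [Sa, Nat.cast_sum]
  rw [← Finset.sum_range_reflect]
  apply Finset.sum_congr rfl
  intro i hi
  simp only [Finset.mem_range] at hi
  rw [show n - (n.succ - 1 - i) = i from by omega]

lemma Geq : Gs = 1 + X * Gs + X ^ 4 * (Iser * Gs) ^ 2 := by
  rw [SaEq]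
  ext n
  rw [map_add, map_add, PowerSeries.coeff_one, Gs, PowerSeries.coeff_mk]
  rcases n with _ | _ | _ | _ | n
  · simp [aa_zero, PowerSeries.coeff_X_pow_mul']
  · rw [PowerSeries.coeff_succ_X_mul, PowerSeries.coeff_mk,
      PowerSeries.coeff_X_pow_mul']
    simp [aa_one, aa_zero]
  · rw [PowerSeries.coeff_succ_X_mul, PowerSeries.coeff_mk,
      PowerSeries.coeff_X_pow_mul']
    simp [aa_two, aa_one]
  · rw [PowerSeries.coeff_succ_X_mul, PowerSeries.coeff_mk,
      PowerSeries.coeff_X_pow_mul']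
    simp [aa_three, aa_two]
  · rw [PowerSeries.coeff_succ_X_mul, PowerSeries.coeff_mk,
      show n + 1 + 1 + 1 + 1 = n + 4 by ring, PowerSeries.coeff_X_pow_mul,
      sq, PowerSeries.coeff_mul]
    have : ∀ p ∈ Finset.HasAntidiagonal.antidiagonal n,
        (PowerSeries.coeff p.1) (PowerSeries.mk fun s => (Sa s : ℤ)) *
          (PowerSeries.coeff p.2) (PowerSeries.mk fun s => (Sa s : ℤ))
          = ((Sa p.1 * Sa p.2 : ℕ) : ℤ) := by
      intro p _
      push_cast
      simp
    rw [Finset.sum_congr rfl this,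
      Finset.Nat.sum_antidiagonal_eq_sum_range_succ_mk]
    rw [aa_rec n]
    push_cast
    simp [show n + 3 + 1 = n + 4 by ring]

open PowerSeries in
theorem motzkin_even_peak_valley_gf :
    ((X : ℤ⟦X⟧) - 1) ^ 2 +
      (X - 1) ^ 3 *
        (PowerSeries.mk fun n =>
          (Nat.card {w : List Step // w.length = n ∧ IsMotzkin w ∧
            (∀ h : ℤ, HasPeak w h → Even h) ∧ (∀ h : ℤ, HasValley w h → Even h)} : ℤ)) +
      X ^ 4 *
        (PowerSeries.mk fun n =>
          (Nat.card {w : List Step // w.length = n ∧ IsMotzkin w ∧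
            (∀ h : ℤ, HasPeak w h → Even h) ∧ (∀ h : ℤ, HasValley w h → Even h)} : ℤ)) ^ 2 = 0 := by
  have hG : (PowerSeries.mk fun n =>
      (Nat.card {w : List Step // w.length = n ∧ IsMotzkin w ∧
        (∀ h : ℤ, HasPeak w h → Even h) ∧ (∀ h : ℤ, HasValley w h → Even h)} : ℤ)) = Gs := rfl
  rw [hG]
  linear_combination (-(((1 : ℤ⟦X⟧) - X) ^ 2)) * Geq +
    (-(X ^ 4 * Gs ^ 2 * (1 + (1 - X) * Iser))) * Ieq
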